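/- For every integer n≥1 there exists a constant C(n)>0, depending only on n, s and f (in particular independent of β and m), such that for every β∈(0,1], every integer m≥n, and every u∈E^{+n}, one has J_β(u) ≤ C(n). -/

import Mathlib

open MeasureTheory

noncomputable section

/-- The space-time domain `Q = (0,π) × (0,2π)`. -/
def Qset : Set (ℝ × ℝ) := Set.Ioo 0 Real.pi ×ˢ Set.Ioo 0 (2 * Real.pi)

/-- Basis function `sin(jx)·cos(kt)`. -/
def phiA (j k : ℕ) : ℝ × ℝ → ℝ := fun p => Real.sin (j * p.1) * Real.cos (k * p.2)

/-- Basis function `sin(jx)·sin(kt)`. -/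
def phiB (j k : ℕ) : ℝ × ℝ → ℝ := fun p => Real.sin (j * p.1) * Real.sin (k * p.2)

/-- The (normalized) Fourier coefficient of `u` against `sin(jx)cos(kt)`. -/
def coefA (j k : ℕ) (u : ℝ × ℝ → ℝ) : ℝ :=
  ((if k = 0 then 1 else 2) / Real.pi ^ 2) * ∫ p in Qset, u p * phiA j k p

/-- The (normalized) Fourier coefficient of `u` against `sin(jx)sin(kt)`. -/
def coefB (j k : ℕ) (u : ℝ × ℝ → ℝ) : ℝ :=
  (2 / Real.pi ^ 2) * ∫ p in Qset, u p * phiB j k p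

/-- `‖w⁺‖_E²`, the square of the `E`-norm of the `E⁺` (i.e. `k > j`) component of `u`. -/
def normPlusSq (u : ℝ × ℝ → ℝ) : ℝ :=
  Real.pi ^ 2 * ∑' jk : ℕ × ℕ,
    if jk.1 < jk.2 then
      |((jk.2 : ℝ) ^ 2 - (jk.1 : ℝ) ^ 2)| * ((coefA jk.1 jk.2 u) ^ 2 + (coefB jk.1 jk.2 u) ^ 2)
    else 0

/-- `‖w⁻‖_E²`, the square of the `E`-norm of the `E⁻` (i.e. `k < j`) component of `u`. -/
def normMinusSq (u : ℝ × ℝ → ℝ) : ℝ :=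
  Real.pi ^ 2 * ∑' jk : ℕ × ℕ,
    if jk.2 < jk.1 then
      |((jk.2 : ℝ) ^ 2 - (jk.1 : ℝ) ^ 2)| * ((coefA jk.1 jk.2 u) ^ 2 + (coefB jk.1 jk.2 u) ^ 2)
    else 0

/-- `‖w‖_E²`, the square of the full `E`-norm (over all `k ≠ j`). -/
def normESq (u : ℝ × ℝ → ℝ) : ℝ := normPlusSq u + normMinusSq u

/-- `‖v_t‖²_{L²(Q)}`, where `v` is the kernel (`k = j`) component of `u`. -/
def vtNormSq (u : ℝ × ℝ → ℝ) : ℝ :=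
  (Real.pi ^ 2 / 2) * ∑' j : ℕ, (j : ℝ) ^ 2 * ((coefA j j u) ^ 2 + (coefB j j u) ^ 2)

/-- `‖u‖_{β,E}² = ‖w⁺‖_E² + ‖w⁻‖_E² + β‖v_t‖²_{L²}`. -/
def normBetaSq (β : ℝ) (u : ℝ × ℝ → ℝ) : ℝ := normPlusSq u + normMinusSq u + β * vtNormSq u

/-- `‖u‖_{β,E}`. -/
def normBeta (β : ℝ) (u : ℝ × ℝ → ℝ) : ℝ := Real.sqrt (normBetaSq β u)

/-- `∫_Q |u|^r dx dt`. -/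
def intPow (r : ℝ) (u : ℝ × ℝ → ℝ) : ℝ := ∫ p in Qset, |u p| ^ r

/-- `∫_Q f·u dx dt`. -/
def intFU (f u : ℝ × ℝ → ℝ) : ℝ := ∫ p in Qset, f p * u p

/-- The functional `I_β`. -/
def Ibeta (s : ℝ) (f : ℝ × ℝ → ℝ) (β : ℝ) (u : ℝ × ℝ → ℝ) : ℝ :=
  (1 / 2) * (normPlusSq u - normMinusSq u - β * vtNormSq u)
    - (1 / (s + 1)) * intPow (s + 1) u - intFU f u

/-- `𝓘_β(u) = 2a₆(I_β(u)² + 1)`. -/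
def calI (s : ℝ) (f : ℝ × ℝ → ℝ) (a6 β : ℝ) (u : ℝ × ℝ → ℝ) : ℝ :=
  2 * a6 * ((Ibeta s f β u) ^ 2 + 1)

/-- The cutoff `ψ(u) = χ(𝓘_β(u)⁻¹·(1/(s+1))∫_Q|u|^{s+1})`. -/
def psiCut (s : ℝ) (f : ℝ × ℝ → ℝ) (a6 : ℝ) (χ : ℝ → ℝ) (β : ℝ) (u : ℝ × ℝ → ℝ) : ℝ :=
  χ ((calI s f a6 β u)⁻¹ * ((1 / (s + 1)) * intPow (s + 1) u))

/-- The truncated functional `J_β`. -/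
def Jbeta (s : ℝ) (f : ℝ × ℝ → ℝ) (a6 : ℝ) (χ : ℝ → ℝ) (β : ℝ) (u : ℝ × ℝ → ℝ) : ℝ :=
  (1 / 2) * (normPlusSq u - normMinusSq u - β * vtNormSq u)
    - (1 / (s + 1)) * intPow (s + 1) u - psiCut s f a6 χ β u * intFU f u

/-- Indices `(j, k, A/B)` of the eigenfunctions with positive eigenvalue: `1 ≤ j < k`. -/
def IdxSet : Set (ℕ × ℕ × Bool) := {i | 1 ≤ i.1 ∧ i.1 < i.2.1}

/-- The eigenfunction corresponding to an index. -/
def idxFun (i : ℕ × ℕ × Bool) : ℝ × ℝ → ℝ := if i.2.2 then phiA i.1 i.2.1 else phiB i.1 i.2.1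

/-- The eigenvalue `k² - j²` of an index. -/
def eigenval (i : ℕ × ℕ × Bool) : ℝ := (i.2.1 : ℝ) ^ 2 - (i.1 : ℝ) ^ 2

/-- `e` (0-indexed: `e_{l+1} = idxFun (e l)`) enumerates the positive-eigenvalue
eigenfunctions in nondecreasing order of `k² - j²`. -/
def IsEnum (e : ℕ → ℕ × ℕ × Bool) : Prop :=
  Function.Injective e ∧ Set.range e = IdxSet ∧
    ∀ l l' : ℕ, l ≤ l' → eigenval (e l) ≤ eigenval (e l')

/-- `E^{+n} = span{e₁, …, e_n}`. -/
def Eplus (e : ℕ → ℕ × ℕ × Bool) (n : ℕ) : Submodule ℝ (ℝ × ℝ → ℝ) :=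
  Submodule.span ℝ (idxFun '' (e '' {l | l < n}))

/-- `E^{-m} = span{sin(jx)cos(kt), sin(jx)sin(kt) : j + k ≤ m, 0 ≤ k < j}`. -/
def Eminus (m : ℕ) : Submodule ℝ (ℝ × ℝ → ℝ) :=
  Submodule.span ℝ {g | ∃ j k : ℕ, j + k ≤ m ∧ k < j ∧ (g = phiA j k ∨ g = phiB j k)}

/-- `N^m = span{sin(jx)cos(jt), sin(jx)sin(jt) : 1 ≤ j ≤ m}`. -/
def Nspace (m : ℕ) : Submodule ℝ (ℝ × ℝ → ℝ) :=
  Submodule.span ℝ {g | ∃ j : ℕ, 1 ≤ j ∧ j ≤ m ∧ (g = phiA j j ∨ g = phiB j j)}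

/-- `E^{+n} ⊕ E^{-m} ⊕ N^m`. -/
def Wnm (e : ℕ → ℕ × ℕ × Bool) (n m : ℕ) : Submodule ℝ (ℝ × ℝ → ℝ) :=
  Eplus e n ⊔ Eminus m ⊔ Nspace m

/-- `f` is `C²`, `2π`-periodic in `t`, and vanishes at `x = 0` and `x = π`. -/
def fAdmissible (f : ℝ × ℝ → ℝ) : Prop :=
  ContDiff ℝ 2 f ∧ (∀ x t : ℝ, f (x, t + 2 * Real.pi) = f (x, t)) ∧
    ∀ t : ℝ, f (0, t) = 0 ∧ f (Real.pi, t) = 0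

/-- The cutoff function `χ`: smooth, `χ = 1` on `(-∞,1]`, `χ = 0` on `[2,∞)`,
and `-2 < χ' < 0` on `(1,2)`. -/
def chiAdmissible (χ : ℝ → ℝ) : Prop :=
  ContDiff ℝ (⊤ : ℕ∞) χ ∧ (∀ t : ℝ, t ≤ 1 → χ t = 1) ∧ (∀ t : ℝ, 2 ≤ t → χ t = 0) ∧
    ∀ t : ℝ, 1 < t → t < 2 → -2 < deriv χ t ∧ deriv χ t < 0


/-! ### Auxiliary lemmas -/

section Aux
open Real

lemma sin_int_two_pi (z : ℤ) : Real.sin ((z:ℝ) * (2*π)) = 0 := by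
  have : (z:ℝ) * (2*π) = ((2*z : ℤ):ℝ) * π := by push_cast; ring
  rw [this, Real.sin_int_mul_pi]

lemma intCosPi (z : ℤ) : (∫ x in (0:ℝ)..π, Real.cos (z * x)) = if z = 0 then π else 0 := by
  split_ifs with h
  · simp [h]
  · have hz : (z:ℝ) ≠ 0 := Int.cast_ne_zero.mpr h
    rw [intervalIntegral.integral_comp_mul_left (fun x => Real.cos x) hz]
    simp [integral_cos, Real.sin_int_mul_pi]

lemma intCos2Pi (z : ℤ) : (∫ x in (0:ℝ)..(2*π), Real.cos (z * x)) = if z = 0 then 2*π else 0 := by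
  split_ifs with h
  · simp [h]
  · have hz : (z:ℝ) ≠ 0 := Int.cast_ne_zero.mpr h
    rw [intervalIntegral.integral_comp_mul_left (fun x => Real.cos x) hz]
    simp [integral_cos, sin_int_two_pi]

lemma intSin2Pi (z : ℤ) : (∫ x in (0:ℝ)..(2*π), Real.sin (z * x)) = 0 := by
  by_cases h : z = 0
  · simp [h]
  · have hz : (z:ℝ) ≠ 0 := Int.cast_ne_zero.mpr h
    rw [intervalIntegral.integral_comp_mul_left (fun x => Real.sin x) hz]
    simp [integral_sin, Real.cos_int_mul_two_pi]

lemma iiCos (c a b : ℝ) : IntervalIntegrable (fun x => Real.cos (c * x)) volume a b :=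
  (Real.continuous_cos.comp (continuous_const.mul continuous_id)).intervalIntegrable a b

lemma iiSin (c a b : ℝ) : IntervalIntegrable (fun x => Real.sin (c * x)) volume a b :=
  (Real.continuous_sin.comp (continuous_const.mul continuous_id)).intervalIntegrable a b

lemma sinsinPi (j j' : ℕ) : (∫ x in (0:ℝ)..π, Real.sin (j*x) * Real.sin (j'*x))
    = if j = j' ∧ 1 ≤ j then π/2 else 0 := by
  have hre : (fun x:ℝ => Real.sin (j*x) * Real.sin (j'*x))
      = fun x => (Real.cos (((((j:ℤ)-(j':ℤ)):ℤ):ℝ) * x) - Real.cos (((((j:ℤ)+(j':ℤ)):ℤ):ℝ) * x))/2 := by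
    funext x
    push_cast
    rw [show ((j:ℝ)-(j':ℝ))*x = j*x - j'*x by ring, show ((j:ℝ)+(j':ℝ))*x = j*x + j'*x by ring,
      Real.cos_sub, Real.cos_add]
    ring
  rw [hre, intervalIntegral.integral_div, intervalIntegral.integral_sub (iiCos _ _ _) (iiCos _ _ _),
    intCosPi, intCosPi]
  by_cases h : j = j' ∧ 1 ≤ j
  · obtain ⟨rfl, h1⟩ := h
    rw [if_pos (by omega), if_neg (by omega), if_pos ⟨rfl, h1⟩]
    ring
  · rw [if_neg h]
    by_cases hjj : j = j'
    · subst hjj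
      have hj0 : j = 0 := by omega
      subst hj0
      norm_num
    · rw [if_neg (by omega), if_neg (by omega)]
      norm_num

lemma sinsin2Pi (k k' : ℕ) : (∫ x in (0:ℝ)..(2*π), Real.sin (k*x) * Real.sin (k'*x))
    = if k = k' ∧ 1 ≤ k then π else 0 := by
  have hre : (fun x:ℝ => Real.sin (k*x) * Real.sin (k'*x))
      = fun x => (Real.cos (((((k:ℤ)-(k':ℤ)):ℤ):ℝ) * x) - Real.cos (((((k:ℤ)+(k':ℤ)):ℤ):ℝ) * x))/2 := by
    funext x
    push_cast
    rw [show ((k:ℝ)-(k':ℝ))*x = k*x - k'*x by ring, show ((k:ℝ)+(k':ℝ))*x = k*x + k'*x by ring,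
      Real.cos_sub, Real.cos_add]
    ring
  rw [hre, intervalIntegral.integral_div, intervalIntegral.integral_sub (iiCos _ _ _) (iiCos _ _ _),
    intCos2Pi, intCos2Pi]
  by_cases h : k = k' ∧ 1 ≤ k
  · obtain ⟨rfl, h1⟩ := h
    rw [if_pos (by omega), if_neg (by omega), if_pos ⟨rfl, h1⟩]
    ring
  · rw [if_neg h]
    by_cases hkk : k = k'
    · subst hkk
      have hk0 : k = 0 := by omega
      subst hk0
      norm_num
    · rw [if_neg (by omega), if_neg (by omega)]
      norm_num

lemma coscos2Pi (k k' : ℕ) : (∫ x in (0:ℝ)..(2*π), Real.cos (k*x) * Real.cos (k'*x))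
    = if k = k' then (if k = 0 then 2*π else π) else 0 := by
  have hre : (fun x:ℝ => Real.cos (k*x) * Real.cos (k'*x))
      = fun x => (Real.cos (((((k:ℤ)-(k':ℤ)):ℤ):ℝ) * x) + Real.cos (((((k:ℤ)+(k':ℤ)):ℤ):ℝ) * x))/2 := by
    funext x
    push_cast
    rw [show ((k:ℝ)-(k':ℝ))*x = k*x - k'*x by ring, show ((k:ℝ)+(k':ℝ))*x = k*x + k'*x by ring,
      Real.cos_sub, Real.cos_add]
    ring
  rw [hre, intervalIntegral.integral_div, intervalIntegral.integral_add (iiCos _ _ _) (iiCos _ _ _),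
    intCos2Pi, intCos2Pi]
  by_cases hkk : k = k'
  · subst hkk
    rw [if_pos rfl, if_pos (by omega)]
    by_cases hk0 : k = 0
    · subst hk0; rw [if_pos rfl, if_pos (by omega)]; ring
    · rw [if_neg hk0, if_neg (by omega)]; ring
  · rw [if_neg hkk, if_neg (by omega), if_neg (by omega)]
    norm_num

lemma sincos2Pi (k k' : ℕ) : (∫ x in (0:ℝ)..(2*π), Real.sin (k*x) * Real.cos (k'*x)) = 0 := by
  have hre : (fun x:ℝ => Real.sin (k*x) * Real.cos (k'*x))
      = fun x => (Real.sin (((((k:ℤ)+(k':ℤ)):ℤ):ℝ) * x) + Real.sin (((((k:ℤ)-(k':ℤ)):ℤ):ℝ) * x))/2 := by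
    funext x
    push_cast
    rw [show ((k:ℝ)+(k':ℝ))*x = k*x + k'*x by ring, show ((k:ℝ)-(k':ℝ))*x = k*x - k'*x by ring,
      Real.sin_add, Real.sin_sub]
    ring
  rw [hre, intervalIntegral.integral_div, intervalIntegral.integral_add (iiSin _ _ _) (iiSin _ _ _),
    intSin2Pi, intSin2Pi]
  norm_num

/-- Product integral over `Q`. -/
lemma Qint_mul (g h : ℝ → ℝ) :
    (∫ p in Qset, g p.1 * h p.2) = (∫ x in (0:ℝ)..π, g x) * (∫ t in (0:ℝ)..(2*π), h t) := by
  have h1 : (∫ x in (0:ℝ)..π, g x) = ∫ x in Set.Ioo (0:ℝ) π, g x := by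
    rw [intervalIntegral.integral_of_le Real.pi_pos.le, ← integral_Ioc_eq_integral_Ioo]
  have h2 : (∫ t in (0:ℝ)..(2*π), h t) = ∫ t in Set.Ioo (0:ℝ) (2*π), h t := by
    rw [intervalIntegral.integral_of_le (by positivity), ← integral_Ioc_eq_integral_Ioo]
  rw [h1, h2, Qset, Measure.volume_eq_prod, MeasureTheory.setIntegral_prod_mul]

lemma idxFun_true (j k : ℕ) : idxFun (j, k, true) = phiA j k := rfl
lemma idxFun_false (j k : ℕ) : idxFun (j, k, false) = phiB j k := rfl

lemma orthoA (i : ℕ × ℕ × Bool) (hi : i ∈ IdxSet) (j k : ℕ) :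
    (∫ p in Qset, idxFun i p * phiA j k p) = if i = (j, k, true) then π^2/2 else 0 := by
  obtain ⟨j₀, k₀, b⟩ := i
  obtain ⟨hj₀, hjk₀⟩ := hi
  replace hj₀ : 1 ≤ j₀ := hj₀
  replace hjk₀ : j₀ < k₀ := hjk₀
  cases b
  · have : (fun p : ℝ×ℝ => idxFun (j₀, k₀, false) p * phiA j k p)
        = fun p => (fun x => Real.sin (j₀*x) * Real.sin (j*x)) p.1
            * (fun t => Real.sin (k₀*t) * Real.cos (k*t)) p.2 := by
      funext p; simp only [idxFun_false, phiB, phiA]; ring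
    rw [this, Qint_mul (fun x => Real.sin (j₀*x) * Real.sin (j*x))
      (fun t => Real.sin (k₀*t) * Real.cos (k*t)), sincos2Pi]
    simp
  · have : (fun p : ℝ×ℝ => idxFun (j₀, k₀, true) p * phiA j k p)
        = fun p => (fun x => Real.sin (j₀*x) * Real.sin (j*x)) p.1
            * (fun t => Real.cos (k₀*t) * Real.cos (k*t)) p.2 := by
      funext p; simp only [idxFun_true, phiB, phiA]; ring
    rw [this, Qint_mul (fun x => Real.sin (j₀*x) * Real.sin (j*x))
      (fun t => Real.cos (k₀*t) * Real.cos (k*t)), sinsinPi, coscos2Pi]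
    by_cases hh : (j₀, k₀, true) = ((j, k, true) : ℕ × ℕ × Bool)
    · obtain ⟨rfl, rfl⟩ : j₀ = j ∧ k₀ = k := by
        simpa using hh
      rw [if_pos hh, if_pos ⟨rfl, hj₀⟩, if_pos rfl, if_neg (by omega)]
      ring
    · rw [if_neg hh]
      by_cases hj : j₀ = j
      · have hk : ¬ k₀ = k := fun h2 => hh (by rw [hj, h2])
        rw [if_neg hk, mul_zero]
      · rw [if_neg (fun hc => hj hc.1), zero_mul]

lemma orthoB (i : ℕ × ℕ × Bool) (hi : i ∈ IdxSet) (j k : ℕ) :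
    (∫ p in Qset, idxFun i p * phiB j k p) = if i = (j, k, false) then π^2/2 else 0 := by
  obtain ⟨j₀, k₀, b⟩ := i
  obtain ⟨hj₀, hjk₀⟩ := hi
  replace hj₀ : 1 ≤ j₀ := hj₀
  replace hjk₀ : j₀ < k₀ := hjk₀
  cases b
  · have : (fun p : ℝ×ℝ => idxFun (j₀, k₀, false) p * phiB j k p)
        = fun p => (fun x => Real.sin (j₀*x) * Real.sin (j*x)) p.1
            * (fun t => Real.sin (k₀*t) * Real.sin (k*t)) p.2 := by
      funext p; simp only [idxFun_false, phiB, phiA]; ring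
    rw [this, Qint_mul (fun x => Real.sin (j₀*x) * Real.sin (j*x))
      (fun t => Real.sin (k₀*t) * Real.sin (k*t)), sinsinPi, sinsin2Pi]
    by_cases hh : (j₀, k₀, false) = ((j, k, false) : ℕ × ℕ × Bool)
    · obtain ⟨rfl, rfl⟩ : j₀ = j ∧ k₀ = k := by
        simpa using hh
      rw [if_pos hh, if_pos ⟨rfl, hj₀⟩, if_pos ⟨rfl, by omega⟩]
      ring
    · rw [if_neg hh]
      by_cases hj : j₀ = j
      · have hk : ¬ (k₀ = k ∧ 1 ≤ k₀) := fun h2 => hh (by rw [hj, h2.1])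
        rw [if_neg hk, mul_zero]
      · rw [if_neg (fun hc => hj hc.1), zero_mul]
  · have : (fun p : ℝ×ℝ => idxFun (j₀, k₀, true) p * phiB j k p)
        = fun p => (fun x => Real.sin (j₀*x) * Real.sin (j*x)) p.1
            * (fun t => Real.sin (k*t) * Real.cos (k₀*t)) p.2 := by
      funext p; simp only [idxFun_true, phiB, phiA]; ring
    rw [this, Qint_mul (fun x => Real.sin (j₀*x) * Real.sin (j*x))
      (fun t => Real.sin (k*t) * Real.cos (k₀*t)), sincos2Pi]
    simp

lemma orthoII (i i' : ℕ × ℕ × Bool) (hi : i ∈ IdxSet) (hi' : i' ∈ IdxSet) :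
    (∫ p in Qset, idxFun i p * idxFun i' p) = if i = i' then π^2/2 else 0 := by
  obtain ⟨j', k', b'⟩ := i'
  cases b'
  · rw [show idxFun (j', k', false) = phiB j' k' from if_neg Bool.false_ne_true, orthoB i hi]
  · rw [show idxFun (j', k', true) = phiA j' k' from if_pos rfl, orthoA i hi]


lemma continuous_phiA (j k : ℕ) : Continuous (phiA j k) := by
  unfold phiA; fun_prop

lemma continuous_phiB (j k : ℕ) : Continuous (phiB j k) := by
  unfold phiB; fun_prop

lemma continuous_idxFun (i : ℕ × ℕ × Bool) : Continuous (idxFun i) := by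
  unfold idxFun
  split_ifs
  · exact continuous_phiA _ _
  · exact continuous_phiB _ _

lemma integrableOn_Q {g : ℝ × ℝ → ℝ} (hg : Continuous g) : IntegrableOn g Qset := by
  have hsub : Qset ⊆ Set.Icc 0 π ×ˢ Set.Icc 0 (2*π) := by
    rintro ⟨x, t⟩ ⟨hx, ht⟩
    exact ⟨⟨hx.1.le, hx.2.le⟩, ⟨ht.1.le, ht.2.le⟩⟩
  exact ((hg.continuousOn).integrableOn_compact (isCompact_Icc.prod isCompact_Icc)).mono_set hsub

lemma eplus_rep {e : ℕ → ℕ × ℕ × Bool} {n : ℕ} {u : ℝ × ℝ → ℝ} (hu : u ∈ Eplus e n) :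
    ∃ c : Fin n → ℝ, u = fun p => ∑ i : Fin n, c i * idxFun (e i) p := by
  have hset : idxFun '' (e '' {l | l < n}) = Set.range (fun i : Fin n => idxFun (e (i : ℕ))) := by
    ext g; constructor
    · rintro ⟨_, ⟨l, hl, rfl⟩, rfl⟩; exact ⟨⟨l, hl⟩, rfl⟩
    · rintro ⟨i, rfl⟩; exact ⟨e i, ⟨i, i.2, rfl⟩, rfl⟩
  rw [Eplus, hset] at hu
  obtain ⟨c, hc⟩ := (Submodule.mem_span_range_iff_exists_fun ℝ).mp hu
  refine ⟨c, ?_⟩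
  funext p
  rw [← hc]
  simp [Finset.sum_apply]

lemma sum_int_phi {e : ℕ → ℕ × ℕ × Bool} {n : ℕ} (c : Fin n → ℝ) {g : ℝ × ℝ → ℝ}
    (hg : Continuous g) :
    (∫ p in Qset, (∑ i : Fin n, c i * idxFun (e i) p) * g p)
      = ∑ i : Fin n, c i * ∫ p in Qset, idxFun (e i) p * g p := by
  have h1 : ∀ p : ℝ × ℝ, (∑ i : Fin n, c i * idxFun (e i) p) * g p
      = ∑ i : Fin n, c i * (idxFun (e i) p * g p) := by
    intro p
    rw [Finset.sum_mul]
    exact Finset.sum_congr rfl fun i _ => by ring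
  simp_rw [h1]
  rw [MeasureTheory.integral_finset_sum]
  · exact Finset.sum_congr rfl fun i _ => by rw [integral_const_mul]
  · intro i _
    exact integrableOn_Q (continuous_const.mul ((continuous_idxFun (e i)).mul hg))

lemma coefA_rep {e : ℕ → ℕ × ℕ × Bool} (he : IsEnum e) {n : ℕ} (c : Fin n → ℝ) (j k : ℕ) :
    coefA j k (fun p => ∑ i : Fin n, c i * idxFun (e i) p)
      = ∑ i : Fin n, (if e i = (j, k, true) then c i else 0) := by
  have hmem : ∀ i : Fin n, e i ∈ IdxSet := fun i => he.2.1 ▸ Set.mem_range_self _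
  rw [coefA, sum_int_phi c (continuous_phiA j k)]
  have h2 : ∀ i : Fin n, c i * (∫ p in Qset, idxFun (e i) p * phiA j k p)
      = if e i = (j, k, true) then c i * (π^2/2) else 0 := by
    intro i
    rw [orthoA (e i) (hmem i) j k]
    split_ifs <;> ring
  simp_rw [h2]
  by_cases hk : k = 0
  · subst hk
    have hz : ∀ i : Fin n, (if e i = (j, 0, true) then c i * (π^2/2) else 0) = 0 := by
      intro i
      rw [if_neg]
      intro hEq
      have h1 := (hmem i).1
      have h2' := (hmem i).2
      rw [hEq] at h2'
      simp at h2'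
    have hz' : ∀ i : Fin n, (if e i = ((j:ℕ), (0:ℕ), true) then c i else 0) = 0 := by
      intro i
      rw [if_neg]
      intro hEq
      have h2' := (hmem i).2
      rw [hEq] at h2'
      simp at h2'
    rw [Finset.sum_eq_zero (fun i _ => hz i), Finset.sum_eq_zero (fun i _ => hz' i), mul_zero]
  · rw [if_neg hk, Finset.mul_sum]
    refine Finset.sum_congr rfl fun i _ => ?_
    split_ifs
    · field_simp
    · rw [mul_zero]

lemma coefB_rep {e : ℕ → ℕ × ℕ × Bool} (he : IsEnum e) {n : ℕ} (c : Fin n → ℝ) (j k : ℕ) :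
    coefB j k (fun p => ∑ i : Fin n, c i * idxFun (e i) p)
      = ∑ i : Fin n, (if e i = (j, k, false) then c i else 0) := by
  have hmem : ∀ i : Fin n, e i ∈ IdxSet := fun i => he.2.1 ▸ Set.mem_range_self _
  rw [coefB, sum_int_phi c (continuous_phiB j k)]
  have h2 : ∀ i : Fin n, c i * (∫ p in Qset, idxFun (e i) p * phiB j k p)
      = if e i = (j, k, false) then c i * (π^2/2) else 0 := by
    intro i
    rw [orthoB (e i) (hmem i) j k]
    split_ifs <;> ring
  simp_rw [h2]
  rw [Finset.mul_sum]
  refine Finset.sum_congr rfl fun i _ => ?_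
  split_ifs
  · field_simp
  · rw [mul_zero]

lemma sq_sum_ite {n : ℕ} {α : Type*} [DecidableEq α] {v : Fin n → α}
    (hv : Function.Injective v) (a : α) (c : Fin n → ℝ) :
    (∑ i : Fin n, if v i = a then c i else 0)^2
      = ∑ i : Fin n, if v i = a then (c i)^2 else 0 := by
  by_cases h : ∃ i, v i = a
  · obtain ⟨i₀, rfl⟩ := h
    have hcond : ∀ (d : Fin n → ℝ) , (∑ i : Fin n, if v i = v i₀ then d i else 0) = d i₀ := by
      intro d
      rw [Finset.sum_congr rfl (fun i _ => by
        rw [show (if v i = v i₀ then d i else 0) = (if i = i₀ then d i else 0) from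
          if_congr ⟨fun hh => hv hh, fun hh => hh ▸ rfl⟩ rfl rfl])]
      simp
    rw [hcond c, hcond (fun i => (c i)^2)]
  · push_neg at h
    rw [Finset.sum_eq_zero (fun i _ => if_neg (h i)),
      Finset.sum_eq_zero (fun i _ => if_neg (h i))]
    norm_num


lemma normPlusSq_rep {e : ℕ → ℕ × ℕ × Bool} (he : IsEnum e) {n : ℕ} (c : Fin n → ℝ) :
    normPlusSq (fun p => ∑ i : Fin n, c i * idxFun (e i) p)
      = π^2 * ∑ i : Fin n, eigenval (e i) * (c i)^2 := by
  have hmem : ∀ i : Fin n, e i ∈ IdxSet := fun i => he.2.1 ▸ Set.mem_range_self _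
  have hinj : Function.Injective (fun i : Fin n => e (i : ℕ)) := by
    intro a b h
    exact Fin.ext (by exact_mod_cast he.1 h)
  set u := fun p => ∑ i : Fin n, c i * idxFun (e i) p with hu
  have hF : ∀ jk : ℕ × ℕ,
      (if jk.1 < jk.2 then
        |((jk.2:ℝ)^2 - (jk.1:ℝ)^2)| * ((coefA jk.1 jk.2 u)^2 + (coefB jk.1 jk.2 u)^2) else 0)
      = ∑ i : Fin n, (if ((e i).1, (e i).2.1) = jk then eigenval (e i) * (c i)^2 else 0) := by
    rintro ⟨j, k⟩
    by_cases hjk : j < k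
    · rw [if_pos hjk]
      rw [show coefA j k u = ∑ i : Fin n, (if e (i:ℕ) = (j, k, true) then c i else 0) from
          coefA_rep he c j k,
        show coefB j k u = ∑ i : Fin n, (if e (i:ℕ) = (j, k, false) then c i else 0) from
          coefB_rep he c j k,
        sq_sum_ite hinj _ c, sq_sum_ite hinj _ c]
      have habs : |((k:ℝ)^2 - (j:ℝ)^2)| = (k:ℝ)^2 - (j:ℝ)^2 := by
        have hle : (j:ℝ) < (k:ℝ) := by exact_mod_cast hjk
        have hj0 : (0:ℝ) ≤ (j:ℝ) := Nat.cast_nonneg j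
        rw [abs_of_nonneg]
        nlinarith
      rw [habs, mul_add, Finset.mul_sum, Finset.mul_sum, ← Finset.sum_add_distrib]
      refine Finset.sum_congr rfl fun i _ => ?_
      rcases hEi : e (i:ℕ) with ⟨ji, ki, bi⟩
      cases bi
      · have hA : ((ji, ki, false) : ℕ × ℕ × Bool) ≠ (j, k, true) := by simp
        rw [if_neg hA, mul_zero, zero_add]
        by_cases hm : ji = j ∧ ki = k
        · obtain ⟨rfl, rfl⟩ := hm
          rw [if_pos rfl, if_pos rfl]
          simp [eigenval]
        · rw [if_neg (by simp [Prod.ext_iff]; tauto), if_neg (by simp [Prod.ext_iff]; tauto),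
            mul_zero]
      · have hB : ((ji, ki, true) : ℕ × ℕ × Bool) ≠ (j, k, false) := by simp
        rw [if_neg hB, mul_zero, add_zero]
        by_cases hm : ji = j ∧ ki = k
        · obtain ⟨rfl, rfl⟩ := hm
          rw [if_pos rfl, if_pos rfl]
          simp [eigenval]
        · rw [if_neg (by simp [Prod.ext_iff]; tauto), if_neg (by simp [Prod.ext_iff]; tauto),
            mul_zero]
    · rw [if_neg hjk]
      symm
      apply Finset.sum_eq_zero
      intro i _
      rw [if_neg]
      intro hEq
      have h2 := (hmem i).2
      have hj : (e (i:ℕ)).1 = j := congrArg Prod.fst hEq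
      have hk : (e (i:ℕ)).2.1 = k := congrArg Prod.snd hEq
      rw [hj, hk] at h2
      exact hjk h2
  have hHS : ∀ i : Fin n, HasSum
      (fun jk : ℕ × ℕ => if ((e (i:ℕ)).1, (e (i:ℕ)).2.1) = jk then eigenval (e i) * (c i)^2 else 0)
      (eigenval (e i) * (c i)^2) := by
    intro i
    have h' : (fun jk : ℕ × ℕ =>
        if ((e (i:ℕ)).1, (e (i:ℕ)).2.1) = jk then eigenval (e i) * (c i)^2 else 0)
        = fun jk => if jk = ((e (i:ℕ)).1, (e (i:ℕ)).2.1) then eigenval (e i) * (c i)^2 else 0 := by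
      funext jk
      exact if_congr eq_comm rfl rfl
    rw [h']
    exact hasSum_ite_eq _ _
  rw [normPlusSq]
  congr 1
  rw [tsum_congr hF, Summable.tsum_finsetSum (fun i _ => (hHS i).summable)]
  exact Finset.sum_congr rfl fun i _ => (hHS i).tsum_eq

lemma L2_rep {e : ℕ → ℕ × ℕ × Bool} (he : IsEnum e) {n : ℕ} (c : Fin n → ℝ) :
    (∫ p in Qset, (∑ i : Fin n, c i * idxFun (e i) p)^2)
      = (π^2/2) * ∑ i : Fin n, (c i)^2 := by
  have hmem : ∀ i : Fin n, e i ∈ IdxSet := fun i => he.2.1 ▸ Set.mem_range_self _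
  have hinj : Function.Injective (fun i : Fin n => e (i : ℕ)) := by
    intro a b h
    exact Fin.ext (by exact_mod_cast he.1 h)
  have h1 : ∀ p : ℝ × ℝ, (∑ i : Fin n, c i * idxFun (e i) p)^2
      = ∑ i : Fin n, ∑ i' : Fin n, (c i * c i') * (idxFun (e i) p * idxFun (e i') p) := by
    intro p
    rw [sq, Finset.sum_mul_sum]
    exact Finset.sum_congr rfl fun i _ => Finset.sum_congr rfl fun i' _ => by ring
  simp_rw [h1]
  rw [MeasureTheory.integral_finset_sum]
  swap
  · intro i _
    apply MeasureTheory.integrable_finset_sum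
    intro i' _
    exact integrableOn_Q (continuous_const.mul ((continuous_idxFun _).mul (continuous_idxFun _)))
  have h2 : ∀ i : Fin n,
      (∫ p in Qset, ∑ i' : Fin n, (c i * c i') * (idxFun (e i) p * idxFun (e i') p))
        = (c i)^2 * (π^2/2) := by
    intro i
    rw [MeasureTheory.integral_finset_sum]
    swap
    · intro i' _
      exact integrableOn_Q (continuous_const.mul ((continuous_idxFun _).mul (continuous_idxFun _)))
    have h3 : ∀ i' : Fin n,
        (∫ p in Qset, (c i * c i') * (idxFun (e i) p * idxFun (e i') p))
          = if i' = i then (c i * c i') * (π^2/2) else 0 := by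
      intro i'
      rw [integral_const_mul, orthoII _ _ (hmem i) (hmem i')]
      by_cases h : i' = i
      · subst h
        rw [if_pos rfl, if_pos rfl]
      · rw [if_neg (fun hh => h (hinj hh).symm), if_neg h, mul_zero]
    simp_rw [h3]
    simp [sq]
  simp_rw [h2]
  rw [Finset.mul_sum]
  exact Finset.sum_congr rfl fun i _ => by ring

lemma normMinusSq_nonneg (u : ℝ × ℝ → ℝ) : 0 ≤ normMinusSq u := by
  apply mul_nonneg (by positivity)
  apply tsum_nonneg
  intro jk
  split_ifs
  · positivity
  · exact le_rfl

lemma vtNormSq_nonneg (u : ℝ × ℝ → ℝ) : 0 ≤ vtNormSq u := by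
  apply mul_nonneg (by positivity)
  apply tsum_nonneg
  intro j
  positivity

lemma rpow_lower {s : ℝ} (hs : 1 < s) {M : ℝ} (hM : 0 < M) (t : ℝ) :
    M * t^2 - M ^ ((s+1)/(s-1)) ≤ |t| ^ (s+1) := by
  have hK : 0 < M ^ ((s+1)/(s-1)) := Real.rpow_pos_of_pos hM _
  rcases eq_or_ne t 0 with rfl | ht
  · rw [abs_zero, Real.zero_rpow (by linarith)]
    nlinarith
  · have ha : 0 < |t| := abs_pos.mpr ht
    by_cases hcase : M ≤ |t| ^ (s-1)
    · have h1 : |t| ^ (s+1) = |t| ^ (s-1) * t^2 := by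
        rw [show s+1 = (s-1) + 2 by ring, Real.rpow_add ha,
          show (2:ℝ) = ((2:ℕ):ℝ) by norm_num, Real.rpow_natCast, sq_abs]
      rw [h1]
      nlinarith [sq_nonneg t]
    · push_neg at hcase
      have hs1 : 0 < s - 1 := by linarith
      have hlt : |t| < M ^ (1/(s-1)) := by
        have h2 : (|t| ^ (s-1)) ^ (1/(s-1)) < M ^ (1/(s-1)) :=
          Real.rpow_lt_rpow (Real.rpow_nonneg ha.le _) hcase (by positivity)
        rwa [← Real.rpow_mul ha.le, mul_one_div, div_self hs1.ne', Real.rpow_one] at h2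
      have hsq : t^2 < (M ^ (1/(s-1)))^2 := by
        rw [← sq_abs]
        exact pow_lt_pow_left₀ hlt ha.le (by norm_num)
      have hKe : (M ^ (1/(s-1)))^2 * M = M ^ ((s+1)/(s-1)) := by
        have h4 : (M ^ (1/(s-1)))^2 * M = M ^ (1/(s-1) + 1/(s-1) + 1) := by
          rw [Real.rpow_add hM, Real.rpow_add hM, Real.rpow_one, sq]
        rw [h4]
        congr 1
        field_simp
        ring
      have hfin : M * t^2 < M ^ ((s+1)/(s-1)) := by
        rw [← hKe]
        nlinarith [hsq, hM, sq_nonneg t]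
      have hnn : (0:ℝ) ≤ |t| ^ (s+1) := Real.rpow_nonneg (abs_nonneg t) (s+1)
      linarith

lemma chi_bounds {χ : ℝ → ℝ} (hχ : chiAdmissible χ) (t : ℝ) : 0 ≤ χ t ∧ χ t ≤ 1 := by
  obtain ⟨hsm, h1, h2, hder⟩ := hχ
  rcases le_or_gt t 1 with h | h
  · rw [h1 t h]
    norm_num
  rcases le_or_gt 2 t with h' | h'
  · rw [h2 t h']
    norm_num
  · have hanti : AntitoneOn χ (Set.Icc 1 2) := by
      apply antitoneOn_of_deriv_nonpos (convex_Icc 1 2) hsm.continuous.continuousOn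
      · intro x _
        exact ((hsm.differentiable (by simp)) x).differentiableWithinAt
      · intro x hx
        rw [interior_Icc] at hx
        exact (hder x hx.1 hx.2).2.le
    have hmem : t ∈ Set.Icc (1:ℝ) 2 := ⟨h.le, h'.le⟩
    constructor
    · have := hanti hmem (Set.right_mem_Icc.mpr one_le_two) h'.le
      rw [h2 2 le_rfl] at this
      exact this
    · have := hanti (Set.left_mem_Icc.mpr one_le_two) hmem h.le
      rw [h1 1 le_rfl] at this
      exact this

end Aux

open Real

/-- `J_β` is bounded above on `E^{+n}` by a constant `C(n)` independent
of `β ∈ (0,1]` and `m`. -/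
theorem statement11 (s : ℝ) (hs : 1 < s) (f : ℝ × ℝ → ℝ) (hf : fAdmissible f)
    (e : ℕ → ℕ × ℕ × Bool) (he : IsEnum e) (a6 : ℝ) (ha6 : 0 < a6)
    (χ : ℝ → ℝ) (hχ : chiAdmissible χ) :
    ∀ n : ℕ, 1 ≤ n → ∃ C : ℝ, 0 < C ∧ ∀ β ∈ Set.Ioc (0 : ℝ) 1, ∀ m : ℕ, n ≤ m →
      ∀ u ∈ Eplus e n, Jbeta s f a6 χ β u ≤ C := by
  intro n hn
  classical
  have hQm : MeasurableSet Qset := by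
    unfold Qset
    exact measurableSet_Ioo.prod measurableSet_Ioo
  have hπ := Real.pi_pos
  set Λ : ℝ := eigenval (e (n-1)) with hΛ
  have hΛpos : 0 < Λ := by
    have hmem : e (n-1) ∈ IdxSet := he.2.1 ▸ Set.mem_range_self _
    obtain ⟨h1, h2⟩ := hmem
    have hc : ((e (n-1)).1 : ℝ) < ((e (n-1)).2.1 : ℝ) := by exact_mod_cast h2
    have h0 : (0:ℝ) ≤ ((e (n-1)).1 : ℝ) := Nat.cast_nonneg _
    rw [hΛ, eigenval]
    nlinarith
  have hs1 : (0:ℝ) < s + 1 := by linarith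
  set M : ℝ := (s+1) * (Λ + 1) with hMdef
  have hMpos : 0 < M := by positivity
  set K : ℝ := M ^ ((s+1)/(s-1)) with hKdef
  have hKpos : 0 < K := Real.rpow_pos_of_pos hMpos _
  have hfc : Continuous f := hf.1.continuous
  set F2 : ℝ := ∫ p in Qset, (f p)^2 with hF2def
  have hF2nn : 0 ≤ F2 := setIntegral_nonneg hQm (fun p _ => sq_nonneg _)
  refine ⟨2*π^2*K/(s+1) + F2/2 + 1, by positivity, ?_⟩
  intro β hβ m hm u hu
  obtain ⟨c, rfl⟩ := eplus_rep hu
  set u : ℝ × ℝ → ℝ := fun p => ∑ i : Fin n, c i * idxFun (e i) p with hudef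
  have hcu : Continuous u := by
    rw [hudef]
    exact continuous_finset_sum _ fun i _ => continuous_const.mul (continuous_idxFun _)
  set L2 : ℝ := ∫ p in Qset, (u p)^2 with hL2def
  have hL2 : L2 = (π^2/2) * ∑ i : Fin n, (c i)^2 := L2_rep he c
  have hL2nn : 0 ≤ L2 := setIntegral_nonneg hQm (fun p _ => sq_nonneg _)
  -- bound on normPlusSq
  have hP : normPlusSq u = π^2 * ∑ i : Fin n, eigenval (e i) * (c i)^2 := normPlusSq_rep he c
  have hPle : normPlusSq u ≤ 2 * (Λ * L2) := by
    rw [hP, hL2]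
    have hterm : ∀ i : Fin n, eigenval (e (i:ℕ)) * (c i)^2 ≤ Λ * (c i)^2 := by
      intro i
      have hle : eigenval (e (i:ℕ)) ≤ Λ := he.2.2 (i:ℕ) (n-1) (by omega)
      exact mul_le_mul_of_nonneg_right hle (sq_nonneg _)
    have hsum := Finset.sum_le_sum (s := Finset.univ) (fun i _ => hterm i)
    calc π^2 * ∑ i : Fin n, eigenval (e (i:ℕ)) * (c i)^2
        ≤ π^2 * ∑ i : Fin n, Λ * (c i)^2 := by
          exact mul_le_mul_of_nonneg_left hsum (by positivity)
      _ = 2 * (Λ * ((π^2/2) * ∑ i : Fin n, (c i)^2)) := by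
          rw [← Finset.mul_sum]
          ring
  -- volume of Q
  have hvol : (volume Qset).toReal = 2*π^2 := by
    have hv : volume Qset = ENNReal.ofReal (π - 0) * ENNReal.ofReal (2*π - 0) := by
      rw [Qset, Measure.volume_eq_prod, Measure.prod_prod, Real.volume_Ioo, Real.volume_Ioo]
    rw [hv, ← ENNReal.ofReal_mul (by linarith), ENNReal.toReal_ofReal (by nlinarith)]
    ring
  -- lower bound on intPow
  have hint1 : IntegrableOn (fun p => M * (u p)^2) Qset :=
    integrableOn_Q (continuous_const.mul (hcu.pow 2))
  have hint2 : IntegrableOn (fun _ : ℝ × ℝ => K) Qset := integrableOn_Q continuous_const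
  have hcrpow : Continuous (fun p => |u p| ^ (s+1)) := by
    apply Continuous.rpow_const (continuous_abs.comp hcu)
    intro x
    exact Or.inr (by linarith)
  have hPow : M * L2 - K * (2*π^2) ≤ intPow (s+1) u := by
    have hintsub : (∫ p in Qset, (M * (u p)^2 - K)) = M * L2 - K * (2*π^2) := by
      rw [MeasureTheory.integral_sub hint1 hint2, integral_const_mul,
        MeasureTheory.setIntegral_const, measureReal_def, hvol, smul_eq_mul, ← hL2def]
      ring
    rw [intPow, ← hintsub]
    exact setIntegral_mono_on (hint1.sub hint2) (integrableOn_Q hcrpow) hQm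
      (fun p _ => rpow_lower hs hMpos (u p))
  -- bound on the f·u term
  have hψ0 : 0 ≤ psiCut s f a6 χ β u := (chi_bounds hχ _).1
  have hψ1 : psiCut s f a6 χ β u ≤ 1 := (chi_bounds hχ _).2
  have hintfu : IntegrableOn (fun p => f p * u p) Qset := integrableOn_Q (hfc.mul hcu)
  have hintabs : IntegrableOn (fun p => |f p * u p|) Qset :=
    integrableOn_Q ((hfc.mul hcu).abs)
  have hintfu2 : IntegrableOn (fun p => (f p)^2/2 + (u p)^2/2) Qset :=
    integrableOn_Q (((hfc.pow 2).div_const 2).add ((hcu.pow 2).div_const 2))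
  have hFU : -(psiCut s f a6 χ β u * intFU f u) ≤ F2/2 + L2/2 := by
    have habs1 : |intFU f u| ≤ ∫ p in Qset, |f p * u p| := by
      rw [intFU]
      have := norm_integral_le_integral_norm (μ := volume.restrict Qset) (fun p => f p * u p)
      simpa only [Real.norm_eq_abs] using this
    have habs2 : (∫ p in Qset, |f p * u p|) ≤ ∫ p in Qset, ((f p)^2/2 + (u p)^2/2) := by
      apply setIntegral_mono_on hintabs hintfu2 hQm
      intro p _
      rw [abs_mul]
      nlinarith [sq_nonneg (|f p| - |u p|), sq_abs (f p), sq_abs (u p), abs_nonneg (f p),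
        abs_nonneg (u p)]
    have hsplit : (∫ p in Qset, ((f p)^2/2 + (u p)^2/2)) = F2/2 + L2/2 := by
      rw [MeasureTheory.integral_add (integrableOn_Q (g := fun p => (f p)^2/2) ((hfc.pow 2).div_const 2))
        (integrableOn_Q (g := fun p => (u p)^2/2) ((hcu.pow 2).div_const 2)), integral_div, integral_div]
    calc -(psiCut s f a6 χ β u * intFU f u) ≤ |psiCut s f a6 χ β u * intFU f u| :=
          neg_le_abs _
      _ = |psiCut s f a6 χ β u| * |intFU f u| := abs_mul _ _
      _ ≤ 1 * |intFU f u| := by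
          apply mul_le_mul_of_nonneg_right _ (abs_nonneg _)
          rw [abs_of_nonneg hψ0]
          exact hψ1
      _ = |intFU f u| := one_mul _
      _ ≤ F2/2 + L2/2 := by
          rw [← hsplit]
          exact habs1.trans habs2
  -- assemble
  have hminus := normMinusSq_nonneg u
  have hvt := vtNormSq_nonneg u
  have hβvt : 0 ≤ β * vtNormSq u := mul_nonneg hβ.1.le hvt
  have hkey : Λ * L2 + L2 - 2*π^2*K/(s+1) ≤ (1/(s+1)) * intPow (s+1) u := by
    have h' : (1/(s+1)) * (M * L2 - K * (2*π^2)) ≤ (1/(s+1)) * intPow (s+1) u :=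
      mul_le_mul_of_nonneg_left hPow (by positivity)
    have heq : (1/(s+1)) * (M * L2 - K * (2*π^2)) = Λ * L2 + L2 - 2*π^2*K/(s+1) := by
      rw [hMdef]
      field_simp
    linarith
  rw [Jbeta]
  linarith
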